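/- arXiv:1904.01146 — 2 statements merged into one kernel-verified Lean document; each statement's English description precedes it below -/
import Mathlib

section
/- Let L = L(q; s_1,...,s_n) with gcd(q, s_j) = 1 for all j, let N_L(k) be the number of lattice points of one-norm k, and θ_L(z) = ∑_{k≥0} N_L(k) z^k. Then the spectral generating function F_L(z) = (1−z^2)/q · ∑_{l=0}^{q-1} ∏_{j=1}^n 1/((1−ξ_q^{l s_j} z)(1−ξ_q^{−l s_j} z)) satisfies F_L(z) = θ_L(z)/(1−z^2)^{n−1}, as formal power series. -/
/-- `N_L(k)`: the number of points of the congruence lattice `L(q; s₁, …, s_n)` with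
one-norm equal to `k`. -/
noncomputable def latticeCount (n q : ℕ) (s : Fin n → ℤ) (k : ℕ) : ℕ :=
  Nat.card {a : Fin n → ℤ // ((q : ℤ) ∣ ∑ i, a i * s i) ∧ ∑ i, (a i).natAbs = k}

open Complex

lemma aux_one_sub_ne_zero {x : ℂ} (hx : ‖x‖ < 1) : (1 : ℂ) - x ≠ 0 := by
  intro h
  rw [sub_eq_zero] at h
  rw [← h] at hx
  simp at hx

lemma aux_hasSum_zpow (w z : ℂ) (hw : ‖w‖ = 1) (hz : ‖z‖ < 1) :
    HasSum (fun a : ℤ => w ^ a * z ^ a.natAbs)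
      ((1 - z ^ 2) * ((1 - w * z) * (1 - w⁻¹ * z))⁻¹) := by
  have hw0 : w ≠ 0 := by intro h; rw [h] at hw; simp at hw
  have hwz : ‖w * z‖ < 1 := by rw [norm_mul, hw, one_mul]; exact hz
  have hwz' : ‖w⁻¹ * z‖ < 1 := by
    rw [norm_mul, norm_inv, hw]; simpa using hz
  have h1 := hasSum_geometric_of_norm_lt_one hwz
  have h2 := (hasSum_geometric_of_norm_lt_one hwz').mul_left (w⁻¹ * z)
  have h3 := h1.int_rec h2
  have hfun : (fun a : ℤ => w ^ a * z ^ a.natAbs) =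
      (Int.rec (fun k => (w * z) ^ k) (fun k => w⁻¹ * z * (w⁻¹ * z) ^ k) : ℤ → ℂ) := by
    funext a
    cases a with
    | ofNat k => simp [mul_pow, zpow_natCast]
    | negSucc k =>
        simp only [zpow_negSucc, Int.natAbs_negSucc, mul_pow, inv_pow, pow_succ]
        ring
  rw [hfun]
  convert h3 using 1
  case e'_3 => rfl
  have e1 : (1 : ℂ) - w * z ≠ 0 := aux_one_sub_ne_zero hwz
  have e2 : (1 : ℂ) - w⁻¹ * z ≠ 0 := aux_one_sub_ne_zero hwz'
  have hwz0 : w - z ≠ 0 := by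
    intro h
    rw [sub_eq_zero] at h
    apply e2
    rw [← h, inv_mul_cancel₀ hw0, sub_self]
  have key : (1 : ℂ) - w⁻¹ * z = (w - z) / w := by field_simp
  rw [key]
  field_simp
  have e1' : (1 : ℂ) - z * w ≠ 0 := by rwa [mul_comm z w]
  field_simp
  ring

lemma aux_summable_norm_zpow (w z : ℂ) (hw : ‖w‖ = 1) (hz : ‖z‖ < 1) :
    Summable (fun a : ℤ => ‖w ^ a * z ^ a.natAbs‖) := by
  have h : ∀ a : ℤ, ‖w ^ a * z ^ a.natAbs‖ = ‖z‖ ^ a.natAbs := by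
    intro a
    rw [norm_mul, norm_zpow, hw, one_zpow, one_mul, norm_pow]
  simp only [h]
  apply Summable.of_nat_of_neg
  · simpa using summable_geometric_of_lt_one (norm_nonneg z) hz
  · simpa using summable_geometric_of_lt_one (norm_nonneg z) hz

lemma aux_mul {𝕜 : Type*} [RCLike 𝕜] {ι ι' : Type*} {f : ι → 𝕜} {g : ι' → 𝕜} {s t : 𝕜}
    (hf : HasSum f s) (hg : HasSum g t) (hf' : Summable fun a => ‖f a‖)
    (hg' : Summable fun b => ‖g b‖) :
    HasSum (fun p : ι × ι' => f p.1 * g p.2) (s * t) ∧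
      Summable fun p : ι × ι' => ‖f p.1 * g p.2‖ := by
  have h2 : Summable fun p : ι × ι' => ‖f p.1 * g p.2‖ := hf'.mul_norm hg'
  exact ⟨hf.mul hg h2.of_norm, h2⟩

set_option maxHeartbeats 1000000 in
lemma aux_hasSum_pi {𝕜 : Type*} [RCLike 𝕜] :
    ∀ (n : ℕ) (f : Fin n → ℤ → 𝕜) (S : Fin n → 𝕜),
      (∀ j, HasSum (f j) (S j)) → (∀ j, Summable fun a => ‖f j a‖) →
      HasSum (fun a : Fin n → ℤ => ∏ j, f j (a j)) (∏ j, S j) ∧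
        Summable fun a : Fin n → ℤ => ∏ j, ‖f j (a j)‖ := by
  intro n
  induction n with
  | zero =>
    intro f S _ _
    simp only [Finset.univ_eq_empty, Finset.prod_empty]
    constructor
    · have h := hasSum_single (f := fun _ : Fin 0 → ℤ => (1 : 𝕜)) default
        (fun b hb => absurd (Subsingleton.elim b default) hb)
      exact h
    · exact (hasSum_single (f := fun _ : Fin 0 → ℤ => (1 : ℝ)) default
        (fun b hb => absurd (Subsingleton.elim b default) hb)).summable
  | succ n ih =>
    intro f S hS hN
    obtain ⟨ihS, ihN⟩ := ih (fun j => f j.succ) (fun j => S j.succ)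
      (fun j => hS j.succ) (fun j => hN j.succ)
    have ihN' : Summable fun b : Fin n → ℤ => ‖∏ j, f j.succ (b j)‖ := by
      have heq : (fun b : Fin n → ℤ => ‖∏ j, f j.succ (b j)‖) =
          fun b : Fin n → ℤ => ∏ j, ‖f j.succ (b j)‖ := by
        funext b; rw [norm_prod]
      rw [heq]; exact ihN
    obtain ⟨hmul, hmulnorm0⟩ := aux_mul (hS 0) ihS (hN 0) ihN'
    have hmulnorm : Summable (fun p : ℤ × (Fin n → ℤ) =>
        ‖f 0 p.1‖ * ∏ j, ‖f (Fin.succ j) (p.2 j)‖) := by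
      have heq : (fun p : ℤ × (Fin n → ℤ) => ‖f 0 p.1‖ * ∏ j, ‖f (Fin.succ j) (p.2 j)‖) =
          fun p : ℤ × (Fin n → ℤ) => ‖f 0 p.1 * ∏ j, f j.succ (p.2 j)‖ := by
        funext p; rw [norm_mul, norm_prod]
      rw [heq]; exact hmulnorm0
    set e := Fin.consEquiv (fun _ : Fin (n + 1) => ℤ) with he
    constructor
    · rw [← e.hasSum_iff]
      have hfe : ((fun a : Fin (n + 1) → ℤ => ∏ j, f j (a j)) ∘ e) =
          fun p : ℤ × (Fin n → ℤ) => f 0 p.1 * ∏ j, f j.succ (p.2 j) := by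
        funext p
        simp [he, Fin.consEquiv, Fin.prod_univ_succ]
      rw [hfe, Fin.prod_univ_succ]
      exact hmul
    · rw [← e.summable_iff]
      have hfe : ((fun a : Fin (n + 1) → ℤ => ∏ j, ‖f j (a j)‖) ∘ e) =
          fun p : ℤ × (Fin n → ℤ) => ‖f 0 p.1‖ * ∏ j, ‖f j.succ (p.2 j)‖ := by
        funext p
        simp [he, Fin.consEquiv, Fin.prod_univ_succ]
      rw [hfe]
      exact hmulnorm

lemma aux_char_sum (q : ℕ) (hq : q ≠ 0) {ξ : ℂ} (hξ : IsPrimitiveRoot ξ q) (m : ℤ) :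
    ∑ l ∈ Finset.range q, ξ ^ ((l : ℤ) * m) = if (q : ℤ) ∣ m then (q : ℂ) else 0 := by
  have h1 : ∀ l : ℕ, ξ ^ ((l : ℤ) * m) = (ξ ^ m) ^ l := by
    intro l
    rw [mul_comm, zpow_mul, zpow_natCast]
  simp only [h1]
  by_cases hd : (q : ℤ) ∣ m
  · have : ξ ^ m = 1 := (hξ.zpow_eq_one_iff_dvd m).mpr hd
    simp [this, hd]
  · have hx : ξ ^ m ≠ 1 := fun h => hd ((hξ.zpow_eq_one_iff_dvd m).mp h)
    rw [if_neg hd, geom_sum_eq hx]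
    have : (ξ ^ m) ^ q = 1 := by
      rw [← zpow_natCast, ← zpow_mul, mul_comm, zpow_mul, zpow_natCast, hξ.pow_eq_one, one_zpow]
    rw [this, sub_self, zero_div]

lemma aux_fiber_finite (n k : ℕ) :
    (Set.Finite {a : Fin n → ℤ | ∑ i, (a i).natAbs = k}) := by
  apply Set.Finite.subset (Set.Finite.pi (fun j : Fin n => Set.finite_Icc (-(k : ℤ)) k))
  intro a ha
  simp only [Set.mem_setOf_eq] at ha
  simp only [Set.mem_pi, Set.mem_univ, Set.mem_Icc, forall_true_left]
  intro j
  have hj : (a j).natAbs ≤ k := by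
    rw [← ha]
    exact Finset.single_le_sum (f := fun i => (a i).natAbs) (fun i _ => Nat.zero_le _) (Finset.mem_univ j)
  omega

lemma aux_fiber_hasSum (n q : ℕ) (s : Fin n → ℤ) (z : ℂ) (k : ℕ) :
    HasSum (fun c : {a : Fin n → ℤ // ∑ i, (a i).natAbs = k} =>
        (if (q : ℤ) ∣ ∑ i, c.1 i * s i then (1 : ℂ) else 0) * z ^ (∑ i, (c.1 i).natAbs))
      ((latticeCount n q s k : ℂ) * z ^ k) := by
  classical
  have hfin : Finite {a : Fin n → ℤ // ∑ i, (a i).natAbs = k} :=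
    (aux_fiber_finite n k).to_subtype
  letI : Fintype {a : Fin n → ℤ // ∑ i, (a i).natAbs = k} := Fintype.ofFinite _
  have h := hasSum_fintype (fun c : {a : Fin n → ℤ // ∑ i, (a i).natAbs = k} =>
    (if (q : ℤ) ∣ ∑ i, c.1 i * s i then (1 : ℂ) else 0) * z ^ (∑ i, (c.1 i).natAbs))
  convert h using 1
  have heq : ∀ c : {a : Fin n → ℤ // ∑ i, (a i).natAbs = k},
      (if (q : ℤ) ∣ ∑ i, c.1 i * s i then (1 : ℂ) else 0) * z ^ (∑ i, (c.1 i).natAbs) =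
      if (q : ℤ) ∣ ∑ i, c.1 i * s i then z ^ k else 0 := by
    intro c
    rw [c.2]
    split <;> simp
  rw [Finset.sum_congr rfl (fun c _ => heq c), Finset.sum_ite, Finset.sum_const,
    Finset.sum_const, smul_zero, add_zero, nsmul_eq_mul]
  congr 1
  rw [latticeCount]
  have e1 : {a : Fin n → ℤ // ((q : ℤ) ∣ ∑ i, a i * s i) ∧ ∑ i, (a i).natAbs = k} ≃
      {c : {a : Fin n → ℤ // ∑ i, (a i).natAbs = k} // (q : ℤ) ∣ ∑ i, c.1 i * s i} := by
    refine (Equiv.subtypeEquivRight (fun a => and_comm)).trans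
      (Equiv.subtypeSubtypeEquivSubtypeInter
        (fun a : Fin n → ℤ => ∑ i, (a i).natAbs = k)
        (fun a : Fin n → ℤ => (q : ℤ) ∣ ∑ i, a i * s i)).symm
  rw [Nat.card_congr e1, Nat.card_eq_fintype_card, Fintype.card_subtype]

lemma aux_theta (n q : ℕ) (s : Fin n → ℤ) (z : ℂ)
    (hF₁ : Summable (fun a : Fin n → ℤ =>
      (if (q : ℤ) ∣ ∑ i, a i * s i then (1 : ℂ) else 0) * z ^ (∑ i, (a i).natAbs))) :
    HasSum (fun a : Fin n → ℤ =>
        (if (q : ℤ) ∣ ∑ i, a i * s i then (1 : ℂ) else 0) * z ^ (∑ i, (a i).natAbs))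
      (∑' k : ℕ, (latticeCount n q s k : ℂ) * z ^ k) := by
  set F₁ := fun a : Fin n → ℤ =>
    (if (q : ℤ) ∣ ∑ i, a i * s i then (1 : ℂ) else 0) * z ^ (∑ i, (a i).natAbs) with hF₁def
  set e := Equiv.sigmaFiberEquiv (fun a : Fin n → ℤ => ∑ i, (a i).natAbs) with he
  have hσ : Summable (F₁ ∘ e) := e.summable_iff.mpr hF₁
  have hsig := hσ.hasSum
  have hfib : ∀ k : ℕ, HasSum (fun c : {a : Fin n → ℤ // ∑ i, (a i).natAbs = k} =>
      (F₁ ∘ e) ⟨k, c⟩) ((latticeCount n q s k : ℂ) * z ^ k) := fun k =>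
    aux_fiber_hasSum n q s z k
  have hΘ : HasSum (fun k : ℕ => (latticeCount n q s k : ℂ) * z ^ k)
      (∑' σ, (F₁ ∘ e) σ) := hsig.sigma hfib
  rw [hΘ.tsum_eq]
  exact e.hasSum_iff.mp hsig

lemma aux_prod_zpow {x : ℂ} (hx : x ≠ 0) {ι : Type*} (t : Finset ι) (m : ι → ℤ) :
    ∏ j ∈ t, x ^ m j = x ^ (∑ j ∈ t, m j) := by
  induction t using Finset.cons_induction with
  | empty => simp
  | cons a t ha ih => rw [Finset.prod_cons, Finset.sum_cons, ih, ← zpow_add₀ hx]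

/-- The spectral generating function of the lens space `L(q; s₁, …, s_n)` equals
`θ_L(z)/(1-z²)^{n-1}`, where `θ_L(z) = ∑_{k ≥ 0} N_L(k) z^k` is the one-norm theta
function of the congruence lattice `L(q; s₁, …, s_n)`, for `|z| < 1`. -/
theorem stmt_11 (n q : ℕ) (hn : 1 ≤ n) (hq : 1 ≤ q) (s : Fin n → ℤ)
    (hs : ∀ j, IsCoprime (q : ℤ) (s j)) (z : ℂ) (hz : ‖z‖ < 1) :
    (1 - z ^ 2) / q *
        ∑ l ∈ Finset.range q, ∏ j : Fin n,
          ((1 - Complex.exp (2 * Real.pi * Complex.I / q) ^ ((l : ℤ) * s j) * z) *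
            (1 - Complex.exp (2 * Real.pi * Complex.I / q) ^ (-((l : ℤ) * s j)) * z))⁻¹ =
      (∑' k : ℕ, (latticeCount n q s k : ℂ) * z ^ k) / (1 - z ^ 2) ^ (n - 1) := by
  classical
  have hn1 : n - 1 + 1 = n := Nat.succ_pred_eq_of_pos hn
  have hq0 : (q : ℂ) ≠ 0 := Nat.cast_ne_zero.mpr (by omega)
  set ξ : ℂ := Complex.exp (2 * Real.pi * Complex.I / q) with hξdef
  have hξ0 : ξ ≠ 0 := Complex.exp_ne_zero _
  have hξ : IsPrimitiveRoot ξ q := Complex.isPrimitiveRoot_exp q (by omega)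
  have hξnorm : ‖ξ‖ = 1 := by
    have h2 : 2 * (Real.pi : ℂ) * Complex.I / q = ((2 * Real.pi / q : ℝ) : ℂ) * Complex.I := by
      push_cast; ring
    rw [hξdef, h2, Complex.norm_exp_ofReal_mul_I]
  set w : ℕ → Fin n → ℂ := fun l j => ξ ^ ((l : ℤ) * s j) with hwdef
  have hwnorm : ∀ l j, ‖w l j‖ = 1 := by
    intro l j
    rw [hwdef]
    simp [norm_zpow, hξnorm]
  have hz2 : (1 : ℂ) - z ^ 2 ≠ 0 := by
    apply aux_one_sub_ne_zero
    rw [norm_pow]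
    exact pow_lt_one₀ (norm_nonneg z) hz two_ne_zero
  set Sval : ℕ → Fin n → ℂ :=
    fun l j => (1 - z ^ 2) * ((1 - w l j * z) * (1 - (w l j)⁻¹ * z))⁻¹ with hSdef
  have hPi : ∀ l : ℕ, HasSum (fun a : Fin n → ℤ => ∏ j, (w l j) ^ (a j) * z ^ (a j).natAbs)
      (∏ j, Sval l j) := fun l =>
    (aux_hasSum_pi n (fun j a => (w l j) ^ a * z ^ a.natAbs) (Sval l)
      (fun j => aux_hasSum_zpow _ z (hwnorm l j) hz)
      (fun j => aux_summable_norm_zpow _ z (hwnorm l j) hz)).1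
  have hfun : ∀ l : ℕ, (fun a : Fin n → ℤ => ∏ j, (w l j) ^ (a j) * z ^ (a j).natAbs) =
      fun a : Fin n → ℤ => ξ ^ ((l : ℤ) * ∑ i, a i * s i) * z ^ (∑ i, (a i).natAbs) := by
    intro l
    funext a
    rw [Finset.prod_mul_distrib]
    congr 1
    · have h1 : ∀ j : Fin n, (w l j) ^ (a j) = ξ ^ ((l : ℤ) * s j * a j) := by
        intro j
        rw [hwdef, ← zpow_mul]
      rw [Finset.prod_congr rfl (fun j _ => h1 j), aux_prod_zpow hξ0]
      congr 1
      rw [Finset.mul_sum]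
      exact Finset.sum_congr rfl (fun i _ => by ring)
    · exact Finset.prod_pow_eq_pow_sum _ _ _
  have hSum : HasSum (fun a : Fin n → ℤ => ∑ l ∈ Finset.range q,
      ξ ^ ((l : ℤ) * ∑ i, a i * s i) * z ^ (∑ i, (a i).natAbs))
      (∑ l ∈ Finset.range q, ∏ j, Sval l j) :=
    hasSum_sum (fun l _ => (hfun l) ▸ hPi l)
  have hinner : ∀ a : Fin n → ℤ, (∑ l ∈ Finset.range q,
      ξ ^ ((l : ℤ) * ∑ i, a i * s i) * z ^ (∑ i, (a i).natAbs))
      = (q : ℂ) * ((if (q : ℤ) ∣ ∑ i, a i * s i then (1 : ℂ) else 0)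
          * z ^ (∑ i, (a i).natAbs)) := by
    intro a
    rw [← Finset.sum_mul, aux_char_sum q (by omega) hξ]
    split_ifs <;> ring
  rw [funext hinner] at hSum
  have hF₁ : Summable (fun a : Fin n → ℤ =>
      (if (q : ℤ) ∣ ∑ i, a i * s i then (1 : ℂ) else 0) * z ^ (∑ i, (a i).natAbs)) := by
    have h := hSum.summable.mul_left (q : ℂ)⁻¹
    have heq : (fun a : Fin n → ℤ => (q : ℂ)⁻¹ * ((q : ℂ) *
        ((if (q : ℤ) ∣ ∑ i, a i * s i then (1 : ℂ) else 0) * z ^ (∑ i, (a i).natAbs)))) =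
        fun a : Fin n → ℤ =>
          (if (q : ℤ) ∣ ∑ i, a i * s i then (1 : ℂ) else 0) * z ^ (∑ i, (a i).natAbs) := by
      funext a
      rw [inv_mul_cancel_left₀ hq0]
    rwa [heq] at h
  have hΘ := aux_theta n q s z hF₁
  have hqΘ := hΘ.mul_left (q : ℂ)
  have hVq : (∑ l ∈ Finset.range q, ∏ j, Sval l j) =
      (q : ℂ) * ∑' k : ℕ, (latticeCount n q s k : ℂ) * z ^ k := hSum.unique hqΘ
  have hprodrw : ∀ l : ℕ, (∏ j : Fin n,
      ((1 - ξ ^ ((l : ℤ) * s j) * z) * (1 - ξ ^ (-((l : ℤ) * s j)) * z))⁻¹) =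
      ∏ j : Fin n, ((1 - w l j * z) * (1 - (w l j)⁻¹ * z))⁻¹ := by
    intro l
    refine Finset.prod_congr rfl fun j _ => ?_
    rw [hwdef, zpow_neg]
  have hV : (∑ l ∈ Finset.range q, ∏ j, Sval l j) = (1 - z ^ 2) ^ n *
      ∑ l ∈ Finset.range q, ∏ j : Fin n, ((1 - w l j * z) * (1 - (w l j)⁻¹ * z))⁻¹ := by
    rw [Finset.mul_sum]
    refine Finset.sum_congr rfl fun l _ => ?_
    rw [hSdef, Finset.prod_mul_distrib, Finset.prod_const, Finset.card_univ, Fintype.card_fin]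
  rw [hV] at hVq
  rw [Finset.sum_congr rfl (fun l _ => hprodrw l)]
  set A := ∑ l ∈ Finset.range q, ∏ j : Fin n, ((1 - w l j * z) * (1 - (w l j)⁻¹ * z))⁻¹
  set T := ∑' k : ℕ, (latticeCount n q s k : ℂ) * z ^ k
  rw [← hn1, pow_succ] at hVq
  field_simp
  linear_combination hVq
end

section
/- For n ≥ 2 and 0 ≤ p ≤ n−1, the eigenvalue families λ_{k,p} = (k+p)(k+2n−p) and λ_{k',p+1} = (k'+p+1)(k'+2n−p−1) are disjoint: λ_{k,p} ≠ λ_{k',p+1} for all nonnegative integers k, k'. -/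
/-- For `n ≥ 2` and `0 ≤ p ≤ n-1`, the Casimir eigenvalue families
`λ_{k,p} = (k+p)(k+2n-p)` and `λ_{k',p+1} = (k'+p+1)(k'+2n-(p+1))` are disjoint. -/
theorem stmt_19 (n p : ℕ) (hn : 2 ≤ n) (hp : p ≤ n - 1) (k k' : ℕ) :
    (k + p) * (k + 2 * n - p) ≠ (k' + (p + 1)) * (k' + 2 * n - (p + 1)) := by
  intro h
  have h1 : p + 1 ≤ n := by omega
  have h2 : p ≤ k + 2 * n := by omega
  have h3 : p + 1 ≤ k' + 2 * n := by omega
  zify [h2, h3] at h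
  rcases le_or_gt k k' with hle | hlt
  · nlinarith [sq_nonneg ((k:ℤ) - k'), mul_le_mul_of_nonneg_left (by exact_mod_cast hle : (k:ℤ) ≤ k') (by positivity : (0:ℤ) ≤ k)]
  · have : (k':ℤ) + 1 ≤ k := by exact_mod_cast hlt
    nlinarith [sq_nonneg ((k:ℤ) - k' - 1)]
end
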